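/- Let k ⊆ K be a field extension, let Γ₀ be a linearly ordered commutative group with zero, and let v : K → Γ₀ be a valuation on K that is trivial on k, i.e. v(c) = 1 for every nonzero c ∈ k. Let H be a k-linear subspace of K of finite dimension e. Then the image v(H ∖ {0}) = {v(h) : h ∈ H, h ≠ 0} is a set of cardinality at most e. If moreover the residue field of v is k, in the sense that for every x ∈ K with v(x) ≤ 1 there exists c ∈ k with v(x − c) < 1, then v(H ∖ {0}) has cardinality exactly e. -/

import Mathlib

open Finset Submodule Module

theorem aux_li17 {k K : Type*} [Field k] [Field K] [Algebra k K]
    {Γ₀ : Type*} [LinearOrderedCommGroupWithZero Γ₀] (v : Valuation K Γ₀)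
    (htriv : ∀ c : k, c ≠ 0 → v (algebraMap k K c) = 1)
    {s : Finset K} (hs0 : ∀ x ∈ s, v x ≠ 0) (hinj : Set.InjOn (⇑v) ↑s) :
    LinearIndependent k ((↑) : s → K) := by
  have hsmul : ∀ (c : k) (x : K), c ≠ 0 → v (c • x) = v x := by
    intro c x hc
    rw [Algebra.smul_def, v.map_mul, htriv c hc, one_mul]
  classical
  rw [linearIndependent_iff']
  intro t g hsum i hi
  by_contra hgi
  set t' : Finset { x // x ∈ s } := t.filter (fun j => g j ≠ 0) with ht'
  have hne : t'.Nonempty := ⟨i, Finset.mem_filter.mpr ⟨hi, hgi⟩⟩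
  obtain ⟨j, hj, hmax⟩ := t'.exists_max_image (fun j => v (j : K)) hne
  have hjs : (j : K) ∈ s := j.2
  have hsum' : ∑ i ∈ t', g i • (i : K) = 0 := by
    rw [← hsum]
    exact Finset.sum_filter_of_ne (by intro x hx hfx; intro h; apply hfx; rw [h, zero_smul])
  have hgj : g j ≠ 0 := (Finset.mem_filter.mp hj).2
  have hval : v (∑ i ∈ t', g i • (i : K)) = v (g j • (j : K)) := by
    apply Valuation.map_sum_eq_of_lt v hj
    · intro i hi'
      simp only [Finset.mem_sdiff, Finset.mem_singleton] at hi'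
      obtain ⟨hit, hij⟩ := hi'
      have hgi' : g i ≠ 0 := (Finset.mem_filter.mp hit).2
      rw [hsmul _ _ hgi', hsmul _ _ hgj]
      refine lt_of_le_of_ne (hmax i hit) ?_
      intro heq
      exact hij (Subtype.ext (hinj i.2 j.2 heq))
  rw [hsum', v.map_zero, hsmul _ _ hgj] at hval
  exact hs0 _ hjs hval.symm

/-- A valuation trivial on `k` takes at most `e = dim_k H` distinct values on a
finite-dimensional `k`-subspace `H` of `K` minus zero, with equality when the residue field
of the valuation is `k`. -/
theorem stmt17 (k K : Type*) [Field k] [Field K] [Algebra k K]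
    (Γ₀ : Type*) [LinearOrderedCommGroupWithZero Γ₀]
    (v : Valuation K Γ₀)
    (htriv : ∀ c : k, c ≠ 0 → v (algebraMap k K c) = 1)
    (H : Submodule k K) (e : ℕ) [FiniteDimensional k H]
    (hdim : Module.finrank k H = e) :
    (⇑v '' {x : K | x ∈ H ∧ x ≠ 0}).Finite ∧
    (⇑v '' {x : K | x ∈ H ∧ x ≠ 0}).ncard ≤ e ∧
    ((∀ x : K, v x ≤ 1 → ∃ c : k, v (x - algebraMap k K c) < 1) →
      (⇑v '' {x : K | x ∈ H ∧ x ≠ 0}).ncard = e) := by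
  classical
  set VS : Set Γ₀ := ⇑v '' {x : K | x ∈ H ∧ x ≠ 0} with hVS
  have hex : ∀ γ ∈ VS, ∃ x : K, x ∈ H ∧ x ≠ 0 ∧ v x = γ := by
    rintro γ ⟨x, ⟨hxH, hx0⟩, rfl⟩; exact ⟨x, hxH, hx0, rfl⟩
  choose! σ hσH hσ0 hσv using hex
  -- the image of any finset of values under σ is linearly independent
  have key1 : ∀ t : Finset Γ₀, ↑t ⊆ VS → t.card ≤ e := by
    intro t ht
    set s : Finset K := t.image σ with hs
    have hvσ : ∀ γ ∈ t, v (σ γ) = γ := fun γ hγ => hσv γ (ht hγ)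
    have hcard : s.card = t.card := Finset.card_image_of_injOn (by
      intro a ha b hb hab
      rw [← hvσ a ha, ← hvσ b hb, hab])
    have hs0 : ∀ x ∈ s, v x ≠ 0 := by
      intro x hx
      obtain ⟨γ, hγ, rfl⟩ := Finset.mem_image.mp hx
      rw [v.ne_zero_iff]
      exact hσ0 γ (ht hγ)
    have hinj : Set.InjOn (⇑v) ↑s := by
      intro x hx y hy hxy
      obtain ⟨a, ha, rfl⟩ := Finset.mem_image.mp hx
      obtain ⟨b, hb, rfl⟩ := Finset.mem_image.mp hy
      rw [hvσ a ha, hvσ b hb] at hxy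
      rw [hxy]
    have hli := aux_li17 v htriv hs0 hinj
    have h1 : Module.finrank k (span k (s : Set K)) = s.card :=
      finrank_span_finset_eq_card hli
    have h2 : span k (s : Set K) ≤ H := by
      rw [span_le]
      intro x hx
      obtain ⟨γ, hγ, rfl⟩ := Finset.mem_image.mp hx
      exact hσH γ (ht hγ)
    have h3 : Module.finrank k (span k (s : Set K)) ≤ Module.finrank k H :=
      Submodule.finrank_mono h2
    omega
  have hfin : VS.Finite := by
    by_contra hinf
    obtain ⟨t, hts, htc⟩ := (Set.not_infinite.not_right.mpr hinf : VS.Infinite).exists_subset_card_eq (e + 1)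
    have := key1 t hts
    omega
  have hle : VS.ncard ≤ e := by
    rw [Set.ncard_eq_toFinset_card VS hfin]
    exact key1 hfin.toFinset (by simp)
  refine ⟨hfin, hle, ?_⟩
  intro hres
  set T : Finset Γ₀ := hfin.toFinset with hT
  set s : Finset K := T.image σ with hs
  -- every element of H lies in the span of σ '' T
  have hspan : ∀ n : ℕ, ∀ h : K, h ∈ H →
      (T.filter (fun γ => γ ≤ v h)).card ≤ n → h ∈ span k (s : Set K) := by
    intro n
    induction n with
    | zero =>
      intro h hH hcard
      by_cases h0 : h = 0
      · simp [h0]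
      · exfalso
        have hvh : v h ∈ VS := ⟨h, ⟨hH, h0⟩, rfl⟩
        have : v h ∈ T.filter (fun γ => γ ≤ v h) :=
          Finset.mem_filter.mpr ⟨hfin.mem_toFinset.mpr hvh, le_rfl⟩
        have := Finset.card_pos.mpr ⟨_, this⟩
        omega
    | succ n ih =>
      intro h hH hcard
      by_cases h0 : h = 0
      · simp [h0]
      · have hvh : v h ∈ VS := ⟨h, ⟨hH, h0⟩, rfl⟩
        have hγ0 : v h ≠ 0 := v.ne_zero_iff.mpr h0
        set x : K := σ (v h) with hx
        have hxH : x ∈ H := hσH _ hvh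
        have hx0 : x ≠ 0 := hσ0 _ hvh
        have hvx : v x = v h := hσv _ hvh
        have h1 : v (h * x⁻¹) ≤ 1 := by
          rw [v.map_mul, map_inv₀, hvx, mul_inv_cancel₀ hγ0]
        obtain ⟨c, hc⟩ := hres (h * x⁻¹) h1
        have heq : h - algebraMap k K c * x = (h * x⁻¹ - algebraMap k K c) * x := by
          field_simp
        have hlt : v (h - algebraMap k K c * x) < v h := by
          rw [heq, v.map_mul, hvx, mul_comm]
          calc v h * v (h * x⁻¹ - algebraMap k K c) < v h * 1 :=
                mul_lt_mul_of_pos_left hc (zero_lt_iff.mpr hγ0)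
            _ = v h := mul_one _
        have hxs : x ∈ s := Finset.mem_image.mpr ⟨v h, hfin.mem_toFinset.mpr hvh, rfl⟩
        have hxspan : x ∈ span k (s : Set K) := subset_span hxs
        set h' : K := h - algebraMap k K c * x with hh'
        have hmem : h = h' + c • x := by rw [hh', Algebra.smul_def]; ring
        have h'H : h' ∈ H := by
          rw [hh', ← Algebra.smul_def]
          exact sub_mem hH (H.smul_mem c hxH)
        by_cases h'0 : h' = 0
        · rw [hmem, h'0, zero_add]
          exact Submodule.smul_mem _ c hxspan
        · have hss : T.filter (fun γ => γ ≤ v h') ⊂ T.filter (fun γ => γ ≤ v h) := by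
            constructor
            · intro γ hγ
              obtain ⟨hγT, hγle⟩ := Finset.mem_filter.mp hγ
              exact Finset.mem_filter.mpr ⟨hγT, hγle.trans hlt.le⟩
            · intro hsub
              have : v h ∈ T.filter (fun γ => γ ≤ v h') :=
                hsub (Finset.mem_filter.mpr ⟨hfin.mem_toFinset.mpr hvh, le_rfl⟩)
              exact absurd (Finset.mem_filter.mp this).2 (not_le.mpr hlt)
          have hcard' : (T.filter (fun γ => γ ≤ v h')).card ≤ n := by
            have := Finset.card_lt_card hss
            omega
          have := ih h' h'H hcard'
          rw [hmem]
          exact Submodule.add_mem _ this (Submodule.smul_mem _ c hxspan)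
  have hHle : H ≤ span k (s : Set K) := fun h hH =>
    hspan (T.filter (fun γ => γ ≤ v h)).card h hH le_rfl
  have h4 : Module.finrank k H ≤ Module.finrank k (span k (s : Set K)) :=
    Submodule.finrank_mono hHle
  have h5 : Module.finrank k (span k (s : Set K)) ≤ s.card :=
    finrank_span_finset_le_card s
  have h6 : s.card ≤ T.card := Finset.card_image_le
  have h7 : VS.ncard = T.card := Set.ncard_eq_toFinset_card VS hfin
  omega
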